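/- Let Δ be a pure d-dimensional simplicial complex (d ≥ 1) on vertex set [n] = {1,...,n}. If the labeling 1,...,n is a perfect elimination ordering of Δ, then there exists a (d−1)-element face σ of Δ (a peak) whose link graph — the simple graph on the vertices not in σ with an edge ij whenever σ ∪ {i,j} is a face of Δ — is chordal, i.e., every cycle of length at least 4 in it has a chord. -/

import Mathlib

/-- The labeling `1, …, n` is a perfect elimination ordering of `Δ`: for every
`(d-1)`-element set `σ` and vertices `σ < i < j < k`, if `σ ∪ {i,k}` and `σ ∪ {j,k}`
are facets of `Δ` then so is `σ ∪ {i,j}`. -/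
def IsPEOComplex {n : ℕ} (d : ℕ) (Δ : Finset (Finset (Fin n))) : Prop :=
  ∀ (σ : Finset (Fin n)) (i j k : Fin n), σ.card = d - 1 →
    (∀ x ∈ σ, x < i) → i < j → j < k →
    insert i (insert k σ) ∈ Δ → insert j (insert k σ) ∈ Δ → insert i (insert j σ) ∈ Δ

/-- The link graph of `σ` in `Δ`: vertices not in `σ` are joined by an edge whenever
`σ ∪ {i, j}` is a face of `Δ` (i.e. is contained in some facet).  Vertices of `σ` are
isolated. -/
def linkGraph {n : ℕ} (Δ : Finset (Finset (Fin n))) (σ : Finset (Fin n)) :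
    SimpleGraph (Fin n) :=
  SimpleGraph.fromRel
    (fun i j => i ∉ σ ∧ j ∉ σ ∧ ∃ φ ∈ Δ, insert i (insert j σ) ⊆ φ)

/-- A graph is chordal if every cycle of length at least 4 has a chord: an edge of the
graph between two vertices of the cycle that is not an edge of the cycle. -/
def IsChordal {V : Type*} (G : SimpleGraph V) : Prop :=
  ∀ (v : V) (c : G.Walk v v), c.IsCycle → 4 ≤ c.length →
    ∃ u w, u ∈ c.support ∧ w ∈ c.support ∧ G.Adj u w ∧ s(u, w) ∉ c.edges

open SimpleGraph Walk in
/-- A path between `a` and `b` that uses the edge `{a,b}` has length 1. -/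
lemma aux_path_edge_length {V : Type*} {G : SimpleGraph V} {a b : V} (p : G.Walk a b)
    (hp : p.IsPath) (hab : a ≠ b) (he : s(a, b) ∈ p.edges) : p.length = 1 := by
  cases p with
  | nil => simp at he
  | @cons _ x _ h r =>
    rw [Walk.edges_cons, List.mem_cons] at he
    rw [Walk.cons_isPath_iff] at hp
    rcases he with he | he
    · rw [Sym2.eq_iff] at he
      rcases he with ⟨-, hbx⟩ | ⟨hax, hba⟩
      · subst hbx
        have : r = Walk.nil := (Walk.isPath_iff_eq_nil (p := r)).mp hp.1
        subst this
        simp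
      · exact absurd hba.symm hab
    · exact absurd (r.fst_mem_support_of_mem_edges he) hp.2

open SimpleGraph Walk in
/-- A graph on a linearly ordered vertex type whose ordering is a perfect elimination
ordering is chordal. -/
lemma aux_peo_chordal {n : ℕ} (G : SimpleGraph (Fin n))
    (H : ∀ i j k : Fin n, i < j → j < k → G.Adj i k → G.Adj j k → G.Adj i j) :
    IsChordal G := by
  intro v c hc hlen
  obtain ⟨k, hk, hkmax⟩ := Finset.exists_max_image c.support.toFinset id
    ⟨v, List.mem_toFinset.mpr c.start_mem_support⟩
  rw [List.mem_toFinset] at hk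
  simp only [id] at hkmax
  have hkmax' : ∀ x ∈ c.support, x ≤ k := fun x hx => hkmax x (List.mem_toFinset.mpr hx)
  set c' := c.rotate k hk with hc'def
  have hcyc' : c'.IsCycle := hc.rotate hk
  have hlen' : c'.length = c.length := by
    rw [← Walk.length_edges, ← Walk.length_edges]
    exact (c.rotate_edges k hk).perm.length_eq
  have hlen4 : 4 ≤ c'.length := hlen' ▸ hlen
  have hnil : ¬ c'.Nil := by
    rw [Walk.nil_iff_length_eq]; omega
  obtain ⟨a, ha, p, hpeq⟩ := Walk.not_nil_iff.mp hnil
  -- decompose p from the back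
  have hpnil : ¬ p.Nil := by
    rw [Walk.nil_iff_length_eq]
    have : c'.length = p.length + 1 := by rw [hpeq]; simp
    omega
  have hrnil : ¬ p.reverse.Nil := by
    rw [Walk.nil_iff_length_eq, Walk.length_reverse]
    rw [Walk.nil_iff_length_eq] at hpnil; omega
  obtain ⟨b, hb, r, hreq⟩ := Walk.not_nil_iff.mp hrnil
  have hpeq2 : p = r.reverse.concat hb.symm := by
    have := congrArg Walk.reverse hreq
    rwa [Walk.reverse_reverse, Walk.reverse_cons] at this
  set q := r.reverse with hqdef
  -- support facts
  have hsupp' : c'.support = k :: p.support := by rw [hpeq]; simp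
  have hpsupp : p.support = q.support ++ [k] := by
    rw [hpeq2, Walk.support_concat]
  have htail : c'.support.tail = p.support := by rw [hsupp', List.tail_cons]
  have hnodup : p.support.Nodup := htail ▸ hcyc'.2
  have hqnodup : q.support.Nodup ∧ k ∉ q.support := by
    rw [hpsupp] at hnodup
    constructor
    · exact (List.nodup_append.mp hnodup).1
    · intro hk'
      exact (List.nodup_append.mp hnodup).2.2 k hk' k (List.mem_singleton.mpr rfl) rfl
  have hamem : a ∈ c.support := by
    have : a ∈ c'.support.tail := by rw [htail]; exact p.start_mem_support
    exact List.mem_of_mem_tail ((c.support_rotate k hk).mem_iff.mp this)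
  have hbmem : b ∈ c.support := by
    have : b ∈ p.support := by
      rw [hpsupp]; exact List.mem_append_left _ q.end_mem_support
    have : b ∈ c'.support.tail := htail ▸ this
    exact List.mem_of_mem_tail ((c.support_rotate k hk).mem_iff.mp this)
  have hak : a < k := lt_of_le_of_ne (hkmax' a hamem) ha.ne'
  have hbk : b < k := lt_of_le_of_ne (hkmax' b hbmem) hb.ne'
  -- a ≠ b
  have hlenq : p.length = q.length + 1 := by rw [hpeq2, Walk.length_concat]
  have hlenc : c'.length = p.length + 1 := by rw [hpeq]; simp
  have hab : a ≠ b := by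
    intro h
    subst h
    have hqpath : q.IsPath := (Walk.isPath_def q).mpr hqnodup.1
    have : q = Walk.nil := (Walk.isPath_iff_eq_nil (p := q)).mp hqpath
    rw [this] at hlenq
    simp at hlenq
    omega
  -- adjacency a b
  have hadj : G.Adj a b := by
    rcases lt_or_gt_of_ne hab with h | h
    · exact H a b k h hbk ha.symm hb.symm
    · exact (H b a k h hak hb.symm ha.symm).symm
  refine ⟨a, b, hamem, hbmem, hadj, ?_⟩
  -- no chord in edges
  intro hmem
  have hmem' : s(a, b) ∈ c'.edges := (c.rotate_edges k hk).perm.mem_iff.mpr hmem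
  have hedges : c'.edges = s(k, a) :: (q.edges ++ [s(b, k)]) := by
    rw [hpeq, Walk.edges_cons, hpeq2, Walk.edges_concat, List.concat_eq_append]
  rw [hedges, List.mem_cons, List.mem_append, List.mem_singleton] at hmem'
  have hka : k ≠ a := ha.ne
  have hkb : k ≠ b := hb.ne
  rcases hmem' with h1 | h2 | h3
  · rw [Sym2.eq_iff] at h1
    rcases h1 with ⟨h, -⟩ | ⟨-, h⟩ <;> [exact hka h.symm; exact hkb h.symm]
  · have hqpath : q.IsPath := (Walk.isPath_def q).mpr hqnodup.1
    have := aux_path_edge_length q hqpath hab h2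
    omega
  · rw [Sym2.eq_iff] at h3
    rcases h3 with ⟨h, h'⟩ | ⟨h, -⟩
    · exact hkb h'.symm
    · exact hka h.symm

theorem stmt_11 {n : ℕ} (d : ℕ) (hd : 1 ≤ d) (Δ : Finset (Finset (Fin n)))
    (hne : Δ.Nonempty) (hpure : ∀ φ ∈ Δ, φ.card = d + 1) (hpeo : IsPEOComplex d Δ) :
    ∃ σ : Finset (Fin n), σ.card = d - 1 ∧ (∃ φ ∈ Δ, σ ⊆ φ) ∧
      IsChordal (linkGraph Δ σ) := by
  classical
  -- the finite set of (d-1)-faces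
  set T : Finset (Finset (Fin n)) :=
    (Finset.univ : Finset (Fin n)).powerset.filter
      (fun σ => σ.card = d - 1 ∧ ∃ φ ∈ Δ, σ ⊆ φ) with hTdef
  have hTne : T.Nonempty := by
    obtain ⟨φ, hφ⟩ := hne
    obtain ⟨σ0, hσ0sub, hσ0card⟩ := Finset.exists_subset_card_eq (s := φ) (n := d - 1)
      (by rw [hpure φ hφ]; omega)
    exact ⟨σ0, Finset.mem_filter.mpr ⟨Finset.mem_powerset.mpr (Finset.subset_univ _),
      hσ0card, φ, hφ, hσ0sub⟩⟩
  obtain ⟨σ, hσT, hσmin⟩ := Finset.exists_min_image T (fun s => ∑ v ∈ s, 2 ^ (v : ℕ)) hTne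
  obtain ⟨-, hσcard, hσface⟩ := Finset.mem_filter.mp hσT
  refine ⟨σ, hσcard, hσface, ?_⟩
  -- key: every link vertex is above all of σ
  have hlow : ∀ i j : Fin n, i ∉ σ → j ∉ σ → i ≠ j →
      (∃ φ ∈ Δ, insert i (insert j σ) ⊆ φ) → ∀ x ∈ σ, x < i := by
    intro i j hiσ hjσ hij ⟨φ, hφ, hsub⟩ x hx
    by_contra hxi
    have hix : i < x := lt_of_le_of_ne (not_lt.mp hxi) (fun h => hiσ (h ▸ hx))
    have hσne : σ.Nonempty := ⟨x, hx⟩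
    set m := σ.max' hσne with hmdef
    have hmm : m ∈ σ := σ.max'_mem hσne
    have him : i < m := lt_of_lt_of_le hix (σ.le_max' x hx)
    set σ' := insert i (σ.erase m) with hσ'def
    have hinotin : i ∉ σ.erase m := fun h => hiσ (Finset.mem_of_mem_erase h)
    have hσ'card : σ'.card = d - 1 := by
      rw [hσ'def, Finset.card_insert_of_notMem hinotin,
        Finset.card_erase_of_mem hmm, hσcard]
      have : 1 ≤ σ.card := Finset.card_pos.mpr hσne
      omega
    have hσ'sub : σ' ⊆ φ := by
      intro y hy
      rcases Finset.mem_insert.mp hy with h | h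
      · exact hsub (by rw [h]; exact Finset.mem_insert_self i _)
      · exact hsub (Finset.mem_insert_of_mem (Finset.mem_insert_of_mem
          (Finset.mem_of_mem_erase h)))
    have hσ'T : σ' ∈ T := Finset.mem_filter.mpr
      ⟨Finset.mem_powerset.mpr (Finset.subset_univ _), hσ'card, φ, hφ, hσ'sub⟩
    have hle := hσmin σ' hσ'T
    -- but key σ' < key σ
    have hkey' : ∑ v ∈ σ', 2 ^ (v : ℕ) = 2 ^ (i : ℕ) + ∑ v ∈ σ.erase m, 2 ^ (v : ℕ) := by
      rw [hσ'def, Finset.sum_insert hinotin]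
    have hkey : ∑ v ∈ σ.erase m, 2 ^ (v : ℕ) + 2 ^ (m : ℕ) = ∑ v ∈ σ, 2 ^ (v : ℕ) :=
      Finset.sum_erase_add σ _ hmm
    have hpow : (2 : ℕ) ^ (i : ℕ) < 2 ^ (m : ℕ) :=
      Nat.pow_lt_pow_right one_lt_two him
    omega
  -- adjacency characterization
  have hadj : ∀ i j : Fin n, (linkGraph Δ σ).Adj i j ↔
      i ≠ j ∧ i ∉ σ ∧ j ∉ σ ∧ insert i (insert j σ) ∈ Δ := by
    intro i j
    constructor
    · rintro ⟨hij, h | h⟩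
      · obtain ⟨hiσ, hjσ, φ, hφ, hsub⟩ := h
        have hcard : (insert i (insert j σ)).card = d + 1 := by
          rw [Finset.card_insert_of_notMem (by
            simp only [Finset.mem_insert]; push_neg; exact ⟨hij, hiσ⟩),
            Finset.card_insert_of_notMem hjσ, hσcard]
          omega
        have : insert i (insert j σ) = φ :=
          Finset.eq_of_subset_of_card_le hsub (by rw [hpure φ hφ, hcard])
        exact ⟨hij, hiσ, hjσ, this ▸ hφ⟩
      · obtain ⟨hjσ, hiσ, φ, hφ, hsub⟩ := h
        have hcard : (insert j (insert i σ)).card = d + 1 := by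
          rw [Finset.card_insert_of_notMem (by
            simp only [Finset.mem_insert]; push_neg; exact ⟨hij.symm, hjσ⟩),
            Finset.card_insert_of_notMem hiσ, hσcard]
          omega
        have heq : insert j (insert i σ) = φ :=
          Finset.eq_of_subset_of_card_le hsub (by rw [hpure φ hφ, hcard])
        rw [Finset.insert_comm]
        exact ⟨hij, hiσ, hjσ, heq ▸ hφ⟩
    · rintro ⟨hij, hiσ, hjσ, hmem⟩
      exact ⟨hij, Or.inl ⟨hiσ, hjσ, insert i (insert j σ), hmem, subset_refl _⟩⟩
  apply aux_peo_chordal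
  intro i j k hij hjk hik hjkadj
  rw [hadj] at hik hjkadj ⊢
  obtain ⟨hik_ne, hiσ, hkσ, hface1⟩ := hik
  obtain ⟨hjk_ne, hjσ, -, hface2⟩ := hjkadj
  have hxlt : ∀ x ∈ σ, x < i :=
    hlow i k hiσ hkσ hik_ne ⟨insert i (insert k σ), hface1, subset_refl _⟩
  exact ⟨hij.ne, hiσ, hjσ, hpeo σ i j k hσcard hxlt hij hjk hface1 hface2⟩
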